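/- Let g ∈ F_q[X] be a monic irreducible polynomial of degree n over the finite field F_q that is not primitive, let β ∈ F_{q^n} be a root of g of multiplicative order e, and let t = (q^n − 1)/e. Then the number of monic primitive polynomials of degree n over F_q having a root α ∈ F_{q^n} with α^t = β equals φ(q^n − 1)/φ(e), where φ is Euler's totient function. -/

import Mathlib

open Polynomial

/-- The (left) shift operator `L` on sequences over `F`, as an `F`-linear endomorphism. -/
def shiftL (F : Type*) [CommSemiring F] : Module.End F (ℕ → F) where
  toFun s := fun i => s (i + 1)
  map_add' _ _ := rfl
  map_smul' _ _ := rfl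

/-- For a polynomial `f`, the operator `f(L)` on sequences. -/
noncomputable def polyL {F : Type*} [CommSemiring F] (f : Polynomial F) :
    Module.End F (ℕ → F) :=
  Polynomial.aeval (shiftL F) f

/-- `Ω(f)`: the set of sequences annihilated by `f(L)`. -/
def OmegaSet {F : Type*} [CommSemiring F] (f : Polynomial F) : Set (ℕ → F) :=
  {s | polyL f s = 0}

/-- Two sequences are shift equivalent if one is a shift of the other. -/
def ShiftEquiv {F : Type*} [CommSemiring F] (s s' : ℕ → F) : Prop :=
  ∃ ℓ : ℕ, s' = (shiftL F ^ ℓ) s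

/-- The cycle (shift-equivalence class) of a sequence. -/
def seqCycle {F : Type*} [CommSemiring F] (s : ℕ → F) : Set (ℕ → F) :=
  {s' | ∃ ℓ : ℕ, s' = (shiftL F ^ ℓ) s}

/-- `N` is the least period of the sequence `s`. -/
def IsLeastPeriod {F : Type*} (s : ℕ → F) (N : ℕ) : Prop :=
  0 < N ∧ (∀ i, s (i + N) = s i) ∧ ∀ M : ℕ, 0 < M → (∀ i, s (i + M) = s i) → N ≤ M

/-- `h` is the minimal polynomial of the sequence `s`: it is monic, annihilates `s`,
and divides every polynomial annihilating `s`. -/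
def IsMinPolyOfSeq {F : Type*} [CommSemiring F] (s : ℕ → F) (h : Polynomial F) : Prop :=
  h.Monic ∧ polyL h s = 0 ∧ ∀ h' : Polynomial F, polyL h' s = 0 → h ∣ h'

/-- `e = ord(f)`: the least `N ≥ 1` with `f ∣ X^N - 1`. -/
def IsOrderOf {F : Type*} [CommRing F] (f : Polynomial F) (e : ℕ) : Prop :=
  0 < e ∧ f ∣ X ^ e - 1 ∧ ∀ N : ℕ, 0 < N → f ∣ X ^ N - 1 → e ≤ N

open IntermediateField

section helpers

variable {F E : Type*} [Field F] [Field E] [Algebra F E]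

/-- If `α` generates `E` over `F` and `α'` has the same minimal polynomial, and both
`t`-th powers equal `b` which also generates `E`, then `α = α'`. -/
lemma aux_eq_of_minpoly_eq [FiniteDimensional F E] {α α' b : E}
    (hb : IntermediateField.adjoin F {b} = ⊤)
    (ha : IntermediateField.adjoin F {α} = ⊤)
    {t : ℕ} (hαt : α ^ t = b) (hα't : α' ^ t = b)
    (hmin : minpoly F α = minpoly F α') : α = α' := by
  have hint : IsIntegral F α := Algebra.IsIntegral.isIntegral α
  have hintb : IsIntegral F b := Algebra.IsIntegral.isIntegral b
  let pb : PowerBasis F F⟮α⟯ := IntermediateField.adjoin.powerBasis hint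
  let ε : F⟮α⟯ ≃ₐ[F] E := (IntermediateField.equivOfEq ha).trans IntermediateField.topEquiv
  let pb' : PowerBasis F E := pb.map ε
  have hgen : pb'.gen = α := rfl
  have hroot' : Polynomial.aeval α' (minpoly F pb'.gen) = 0 := by
    rw [hgen, hmin]; exact minpoly.aeval F α'
  let σ : E →ₐ[F] E := pb'.lift α' hroot'
  have hσα : σ α = α' := by rw [← hgen]; exact pb'.lift_gen α' hroot'
  have hσb : σ b = b := by
    conv_lhs => rw [← hαt]
    rw [map_pow, hσα, hα't]
  have hadj : Algebra.adjoin F {b} = ⊤ := by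
    rw [← IntermediateField.adjoin_simple_toSubalgebra_of_isAlgebraic hintb.isAlgebraic, hb,
      IntermediateField.top_toSubalgebra]
  have hle : Algebra.adjoin F {b} ≤ AlgHom.equalizer σ (AlgHom.id F E) := by
    apply Algebra.adjoin_le
    rintro x rfl
    simpa [AlgHom.mem_equalizer] using hσb
  have hid : ∀ x : E, σ x = x := by
    intro x
    have : x ∈ AlgHom.equalizer σ (AlgHom.id F E) := hle (hadj ▸ Algebra.mem_top)
    simpa [AlgHom.mem_equalizer] using this
  rw [← hσα, hid α]

end helpers

section helpers2

variable {F E : Type*} [Field F] [Field E] [Algebra F E]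

lemma aux_adjoin_top [Fintype E] (α : Eˣ) (h : orderOf α = Nat.card Eˣ) :
    IntermediateField.adjoin F {(α : E)} = ⊤ := by
  rw [eq_top_iff]
  rintro x -
  rcases eq_or_ne x 0 with rfl | hx
  · exact zero_mem _
  · have htop : Subgroup.zpowers α = ⊤ := by
      apply Subgroup.eq_top_of_card_eq
      rw [Nat.card_zpowers, h]
    have hmem : Units.mk0 x hx ∈ Subgroup.zpowers α := by rw [htop]; trivial
    obtain ⟨k, hk⟩ := (IsOfFinOrder.mem_powers_iff_mem_zpowers
      (isOfFinOrder_of_finite α)).mpr hmem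
    have hx' : x = (α : E) ^ k := by
      have := congrArg (Units.val) hk
      simpa [Units.val_pow_eq_pow_val] using this.symm
    rw [hx']
    exact pow_mem (IntermediateField.mem_adjoin_simple_self F (α : E)) k

end helpers2

section count

lemma aux_count {G : Type*} [CommGroup G] [Fintype G] [DecidableEq G] [IsCyclic G]
    (β : G) (e t : ℕ) (he : orderOf β = e) (het : e * t = Fintype.card G) :
    (Finset.univ.filter fun α : G => orderOf α = Fintype.card G ∧ α ^ t = β).card
      = (Fintype.card G).totient / e.totient := by
  classical
  set Q := Fintype.card G with hQdef
  have hQpos : 0 < Q := Fintype.card_pos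
  have hepos : 0 < e := he ▸ orderOf_pos β
  have htpos : 0 < t := by
    rcases Nat.eq_zero_or_pos t with rfl | h
    · omega
    · exact h
  have heQ : e ∣ Q := ⟨t, het.symm⟩
  have htQ : t ∣ Q := ⟨e, by rw [← het, mul_comm]⟩
  haveI : NeZero Q := ⟨hQpos.ne'⟩
  have key : ∀ x : G, orderOf x = e →
      (Finset.univ.filter fun α : G => orderOf α = Q ∧ α ^ t = x).card
        = (Finset.univ.filter fun α : G => orderOf α = Q ∧ α ^ t = β).card := by
    intro x hx
    have hmem : x ∈ Subgroup.zpowers β := by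
      have hsub : (Subgroup.zpowers β : Set G).toFinset ⊆
          Finset.univ.filter fun y : G => y ^ e = 1 := by
        intro y hy
        rw [Set.mem_toFinset] at hy
        simp only [Finset.mem_filter, Finset.mem_univ, true_and]
        have := orderOf_dvd_of_mem_zpowers hy
        rw [he] at this
        exact orderOf_dvd_iff_pow_eq_one.mp this
      have hTcard : (Finset.univ.filter fun y : G => y ^ e = 1).card ≤ e :=
        IsCyclic.card_pow_eq_one_le hepos
      have hzcard : (Subgroup.zpowers β : Set G).toFinset.card = e := by
        rw [Set.toFinset_card]
        simpa [Fintype.card_zpowers] using he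
      have heqT : (Subgroup.zpowers β : Set G).toFinset
          = Finset.univ.filter fun y : G => y ^ e = 1 :=
        Finset.eq_of_subset_of_card_le hsub (by omega)
      have hxT : x ∈ Finset.univ.filter fun y : G => y ^ e = 1 := by
        simp only [Finset.mem_filter, Finset.mem_univ, true_and]
        rw [← hx]; exact pow_orderOf_eq_one x
      rw [← heqT, Set.mem_toFinset] at hxT
      exact hxT
    obtain ⟨k, hk⟩ := (IsOfFinOrder.mem_powers_iff_mem_zpowers
      (isOfFinOrder_of_finite β)).mpr hmem
    change β ^ k = x at hk
    have hek : Nat.Coprime e k := by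
      have horder : orderOf (β ^ k) = e := by rw [hk, hx]
      rw [orderOf_pow, he] at horder
      rcases Nat.div_eq_self.mp horder with h | h
      · omega
      · exact h
    haveI : NeZero e := ⟨hepos.ne'⟩
    obtain ⟨u, hu⟩ := ZMod.unitsMap_surjective heQ (ZMod.unitOfCoprime k hek.symm)
    set k' := (u : ZMod Q).val with hk'def
    have hk'Q : Nat.Coprime k' Q := ZMod.val_coe_unit_coprime u
    have hmod : (k' : ZMod e) = (k : ZMod e) := by
      have h1 := congrArg (fun w : (ZMod e)ˣ => (w : ZMod e)) hu
      simp only [ZMod.unitsMap_def, Units.coe_map, ZMod.castHom_apply,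
        MonoidHom.coe_coe, ZMod.coe_unitOfCoprime] at h1
      rw [hk'def, ZMod.natCast_val]
      exact h1
    have hβk' : β ^ k' = β ^ k := by
      rw [pow_eq_pow_iff_modEq, he]
      exact (ZMod.natCast_eq_natCast_iff _ _ _).mp hmod
    have hco : (Nat.card G).Coprime k' := by
      rw [Nat.card_eq_fintype_card, ← hQdef]; exact hk'Q.symm
    symm
    apply Finset.card_bij (fun α _ => α ^ k')
    · intro a ha
      simp only [Finset.mem_filter, Finset.mem_univ, true_and] at ha ⊢
      obtain ⟨h1, h2⟩ := ha
      refine ⟨?_, ?_⟩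
      · rw [Nat.Coprime.orderOf_pow]
        · exact h1
        · rw [h1]; exact hk'Q.symm
      · rw [pow_right_comm, h2, hβk', hk]
    · intro a _ b _ hab
      exact (powCoprime hco).injective (by simpa [powCoprime_apply] using hab)
    · intro c hc
      simp only [Finset.mem_filter, Finset.mem_univ, true_and] at hc
      set a := (powCoprime hco).symm c with hadef
      have hak : a ^ k' = c := by
        have h := (powCoprime hco).apply_symm_apply c
        rw [← hadef, powCoprime_apply] at h
        exact h
      have hda : orderOf a = Q := by
        have hdvd : orderOf a ∣ Q := hQdef ▸ orderOf_dvd_card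
        have hcop : (orderOf a).Coprime k' := Nat.Coprime.coprime_dvd_left hdvd hk'Q.symm
        calc orderOf a = orderOf (a ^ k') := (Nat.Coprime.orderOf_pow hcop).symm
          _ = Q := by rw [hak, hc.1]
      have hat : a ^ t = β := by
        apply (powCoprime hco).injective
        simp only [powCoprime_apply]
        rw [pow_right_comm, hak, hc.2, hβk', hk]
      exact ⟨a, by simp only [Finset.mem_filter, Finset.mem_univ, true_and]; exact ⟨hda, hat⟩, hak⟩
  have h1 : (Finset.univ.filter fun α : G => orderOf α = Q).card = Q.totient := by
    simpa using IsCyclic.card_orderOf_eq_totient (α := G) (d := Q) dvd_rfl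
  have h2 : (Finset.univ.filter fun x : G => orderOf x = e).card = e.totient := by
    simpa using IsCyclic.card_orderOf_eq_totient (α := G) (d := e) heQ
  have hmemb : ∀ α ∈ Finset.univ.filter fun α : G => orderOf α = Q,
      α ^ t ∈ Finset.univ.filter fun x : G => orderOf x = e := by
    intro α hα
    simp only [Finset.mem_filter, Finset.mem_univ, true_and] at hα ⊢
    rw [orderOf_pow, hα, Nat.gcd_eq_right htQ, ← het, Nat.mul_div_cancel _ htpos]
  have h3 := Finset.card_eq_sum_card_fiberwise hmemb
  simp only [Finset.filter_filter] at h3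
  have h4 : ∀ x ∈ Finset.univ.filter fun x : G => orderOf x = e,
      (Finset.univ.filter fun α : G => orderOf α = Q ∧ α ^ t = x).card
        = (Finset.univ.filter fun α : G => orderOf α = Q ∧ α ^ t = β).card := by
    intro x hxm
    simp only [Finset.mem_filter, Finset.mem_univ, true_and] at hxm
    exact key x hxm
  rw [Finset.sum_congr rfl h4, Finset.sum_const, smul_eq_mul, h1, h2] at h3
  rw [h3, Nat.mul_div_cancel_left _ (Nat.totient_pos.mpr hepos)]

end count

/-- the number of monic primitive polynomials of degree `n` over `F_q`
having a root `α` with `α^t = β` equals `φ(q^n − 1)/φ(e)`. -/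
theorem stmt0 {F E : Type*} [Field F] [Fintype F] [Field E] [Fintype E] [Algebra F E]
    (n : ℕ) (hn : 0 < n) (hcard : Fintype.card E = Fintype.card F ^ n)
    (g : Polynomial F) (hmonic : g.Monic) (hirr : Irreducible g) (hdeg : g.natDegree = n)
    (β : Eˣ) (hroot : Polynomial.aeval (β : E) g = 0)
    (e : ℕ) (he : e = orderOf β)
    (hnotprim : e ≠ Fintype.card F ^ n - 1)
    (t : ℕ) (ht : t = (Fintype.card F ^ n - 1) / e) :
    {q : Polynomial F | q.Monic ∧ q.natDegree = n ∧
        ∃ α : Eˣ, orderOf α = Fintype.card F ^ n - 1 ∧ minpoly F (α : E) = q ∧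
          α ^ t = β}.ncard
      = Nat.totient (Fintype.card F ^ n - 1) / Nat.totient e := by
  classical
  have hcardF : 1 < Fintype.card F := Fintype.one_lt_card
  set Q := Fintype.card F ^ n - 1 with hQdef
  have hQcard : Fintype.card Eˣ = Q := by rw [Fintype.card_units, hcard]
  have heQ : e ∣ Q := by rw [he, ← hQcard]; exact orderOf_dvd_card
  have hfr : Module.finrank F E = n := by
    have h1 : Fintype.card E = Fintype.card F ^ Module.finrank F E := Module.card_eq_pow_finrank
    rw [hcard] at h1
    exact Nat.pow_right_injective hcardF h1.symm
  have hming : minpoly F (β : E) = g :=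
    (minpoly.eq_of_irreducible_of_monic hirr hroot hmonic).symm
  have hintβ : IsIntegral F (β : E) := Algebra.IsIntegral.isIntegral _
  have hβtop : IntermediateField.adjoin F {(β : E)} = ⊤ := by
    apply IntermediateField.eq_of_le_of_finrank_eq le_top
    rw [IntermediateField.adjoin.finrank hintβ, hming, hdeg,
      IntermediateField.finrank_top', hfr]
  set A' : Set Eˣ := {α : Eˣ | orderOf α = Q ∧ α ^ t = β} with hA'
  have himg : {q : Polynomial F | q.Monic ∧ q.natDegree = n ∧
      ∃ α : Eˣ, orderOf α = Q ∧ minpoly F (α : E) = q ∧ α ^ t = β}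
      = (fun α : Eˣ => minpoly F (α : E)) '' A' := by
    ext q1
    constructor
    · rintro ⟨_, _, α, hα1, hα2, hα3⟩
      exact ⟨α, ⟨hα1, hα3⟩, hα2⟩
    · rintro ⟨α, ⟨hα1, hα3⟩, rfl⟩
      have hint : IsIntegral F (α : E) := Algebra.IsIntegral.isIntegral _
      have hαtop : IntermediateField.adjoin F {(α : E)} = ⊤ :=
        aux_adjoin_top α (by rw [Nat.card_eq_fintype_card, hQcard]; exact hα1)
      refine ⟨minpoly.monic hint, ?_, α, hα1, rfl, hα3⟩
      rw [← IntermediateField.adjoin.finrank hint, hαtop,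
        IntermediateField.finrank_top', hfr]
  have hinj : Set.InjOn (fun α : Eˣ => minpoly F (α : E)) A' := by
    rintro α ⟨hα1, hα3⟩ α' ⟨hα'1, hα'3⟩ hmin
    have hαtop : IntermediateField.adjoin F {(α : E)} = ⊤ :=
      aux_adjoin_top α (by rw [Nat.card_eq_fintype_card, hQcard]; exact hα1)
    have hαt : (α : E) ^ t = (β : E) := by
      rw [← Units.val_pow_eq_pow_val, hα3]
    have hα't : (α' : E) ^ t = (β : E) := by
      rw [← Units.val_pow_eq_pow_val, hα'3]
    exact Units.ext (aux_eq_of_minpoly_eq hβtop hαtop hαt hα't hmin)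
  rw [himg, Set.ncard_image_of_injOn hinj]
  have hA'card : A'.ncard
      = (Finset.univ.filter fun α : Eˣ => orderOf α = Fintype.card Eˣ ∧ α ^ t = β).card := by
    rw [Set.ncard_eq_toFinset_card']
    congr 1
    ext α
    simp [hA', hQcard]
  rw [hA'card, aux_count β e t he.symm (by rw [hQcard, ht]; exact Nat.mul_div_cancel' heQ),
    hQcard]
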